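/- arXiv:2112.11901 — 3 statements merged into one kernel-verified Lean document; each statement's English description precedes it below -/
import Mathlib

section
/- One-parameter case (Remark 3.3). Let ε ≥ 0 and let M, N : R → vec be finitely presentable one-parameter persistence modules that are ε-interleaved. Let 0 → P_1 → P_0 → M → 0 and 0 → Q_1 → Q_0 → N → 0 be minimal free resolutions of M and N. Then there exists a 2ε-bijection between the multiset ℬ(P_0) ∪ ℬ(Q_1) and the multiset ℬ(Q_0) ∪ ℬ(P_1); in other words, d̂_B(ℬβ(M), ℬβ(N)) ≤ 2·d_I(M,N) for one-parameter persistence modules. -/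
set_option linter.unusedVariables false
set_option maxHeartbeats 800000

open scoped Classical ENNReal

noncomputable section

/-- Points of `R^n`. The metric on `Fin n → ℝ` is the sup-metric, so `dist` is `‖·‖_∞`. -/
abbrev Pt (n : ℕ) := Fin n → ℝ

/-- An `n`-parameter persistence module: a functor from the poset `R^n`
to finite-dimensional `k`-vector spaces. -/
structure PersMod (k : Type) [Field k] (n : ℕ) where
  X : Pt n → Type
  [acg : ∀ r, AddCommGroup (X r)]
  [mod : ∀ r, Module k (X r)]
  [fd : ∀ r, FiniteDimensional k (X r)]
  map : ∀ {r s : Pt n}, r ≤ s → (X r →ₗ[k] X s)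
  map_id : ∀ r : Pt n, map (le_refl r) = LinearMap.id
  map_comp : ∀ {r s t : Pt n} (h₁ : r ≤ s) (h₂ : s ≤ t),
    (map h₂).comp (map h₁) = map (h₁.trans h₂)

attribute [instance] PersMod.acg PersMod.mod PersMod.fd

variable {k : Type} [Field k] {n : ℕ}

/-- A morphism of persistence modules: a natural transformation. -/
structure PersHom (M N : PersMod k n) where
  app : ∀ r, M.X r →ₗ[k] N.X r
  natural : ∀ {r s : Pt n} (h : r ≤ s),
    (N.map h).comp (app r) = (app s).comp (M.map h)

def shiftPt (ε : ℝ) (r : Pt n) : Pt n := fun i => r i + ε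

lemma shiftPt_mono {ε : ℝ} {r s : Pt n} (h : r ≤ s) : shiftPt ε r ≤ shiftPt ε s :=
  fun i => add_le_add (h i) (le_refl ε)

lemma le_shiftPt {ε : ℝ} (hε : 0 ≤ ε) (r : Pt n) : r ≤ shiftPt ε r :=
  fun i => le_add_of_nonneg_right hε

/-- The `ε`-shift of a persistence module. -/
def PersMod.shift (M : PersMod k n) (ε : ℝ) : PersMod k n where
  X r := M.X (shiftPt ε r)
  map h := M.map (shiftPt_mono h)
  map_id r := M.map_id _
  map_comp h₁ h₂ := M.map_comp _ _

/-- `M` and `N` are `ε`-interleaved. -/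
def Interleaved (ε : ℝ) (M N : PersMod k n) : Prop :=
  ∃ hε : 0 ≤ ε,
  ∃ (f : PersHom M (N.shift ε)) (g : PersHom N (M.shift ε)),
    (∀ r : Pt n, (g.app (shiftPt ε r)).comp (f.app r)
        = M.map ((le_shiftPt hε r).trans (le_shiftPt hε _))) ∧
    (∀ r : Pt n, (f.app (shiftPt ε r)).comp (g.app r)
        = N.map ((le_shiftPt hε r).trans (le_shiftPt hε _)))

/-- The interleaving distance. -/
def interleavingDist (M N : PersMod k n) : ℝ≥0∞ :=
  sInf { e : ℝ≥0∞ | ∃ ε : ℝ, e = ENNReal.ofReal ε ∧ Interleaved ε M N }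

/-- The free persistence module `⊕_i F_{L i}`, where `F_j` is the "upset" interval module
generated at `j`. -/
def freeModFin {m : ℕ} (L : Fin m → Pt n) : PersMod k n where
  X r := {i : Fin m // L i ≤ r} → k
  map {r s} h :=
    { toFun := fun f i => if h' : L i.1 ≤ r then f ⟨i.1, h'⟩ else 0
      map_add' := by
        intro f g; funext i
        by_cases h' : L i.1 ≤ r <;> simp [h']
      map_smul' := by
        intro c f; funext i
        by_cases h' : L i.1 ≤ r <;> simp [h'] }
  map_id r := by
    apply LinearMap.ext; intro f; funext i
    show (if h' : L i.1 ≤ r then f ⟨i.1, h'⟩ else 0) = f i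
    rw [dif_pos i.2]
  map_comp {r s t} h₁ h₂ := by
    apply LinearMap.ext; intro f; funext i
    show (if hs : L i.1 ≤ s then
            (if hr : L i.1 ≤ r then f ⟨i.1, hr⟩ else 0) else 0)
        = (if hr : L i.1 ≤ r then f ⟨i.1, hr⟩ else 0)
    by_cases hr : L i.1 ≤ r
    · simp [hr, hr.trans h₁]
    · simp [hr]

/-- Isomorphism of persistence modules. -/
def PersIso (M N : PersMod k n) : Prop :=
  ∃ (f : PersHom M N) (g : PersHom N M),
    (∀ r, (g.app r).comp (f.app r) = LinearMap.id) ∧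
    (∀ r, (f.app r).comp (g.app r) = LinearMap.id)

/-- `P` is free of finite rank with barcode `B`. -/
def IsFreeWith (P : PersMod k n) (B : Multiset (Pt n)) : Prop :=
  ∃ (m : ℕ) (L : Fin m → Pt n), B = (List.ofFn L : Multiset (Pt n)) ∧ PersIso P (freeModFin L)

/-- `M` is finitely presentable: it is (isomorphic to) the cokernel of a morphism
between free modules of finite rank. -/
def FinitelyPresentable (M : PersMod k n) : Prop :=
  ∃ (c r : ℕ) (Lc : Fin c → Pt n) (Lr : Fin r → Pt n)
    (f : PersHom (freeModFin Lc) (freeModFin Lr)) (g : PersHom (freeModFin Lr) M),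
    (∀ x, Function.Surjective (g.app x)) ∧
    (∀ x, LinearMap.range (f.app x) = LinearMap.ker (g.app x))

/-- A resolution of `M` of length `len`:
an exact sequence `0 → P_len → ⋯ → P_0 → M → 0` (encoded with `P j = 0` for `j > len`). -/
structure Res (M : PersMod k n) where
  len : ℕ
  P : ℕ → PersMod k n
  d : ∀ j : ℕ, PersHom (P (j + 1)) (P j)
  aug : PersHom (P 0) M
  aug_surj : ∀ r, Function.Surjective (aug.app r)
  exact_zero : ∀ r, LinearMap.range ((d 0).app r) = LinearMap.ker (aug.app r)
  exact_succ : ∀ (j : ℕ) (r), LinearMap.range ((d (j + 1)).app r) = LinearMap.ker ((d j).app r)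
  vanish : ∀ j, len < j → ∀ r, ∀ x : (P j).X r, x = 0

/-- Projectivity in the category of persistence modules
(where epimorphisms are the pointwise surjections). -/
def IsProjectiveMod (P : PersMod k n) : Prop :=
  ∀ (A B : PersMod k n) (e : PersHom A B), (∀ r, Function.Surjective (e.app r)) →
    ∀ f : PersHom P B, ∃ g : PersHom P A, ∀ r, (e.app r).comp (g.app r) = f.app r

/-- An `ε`-bijection between two multisets of points of `R^n`. -/
def IsMatching (ε : ℝ) (B C : Multiset (Pt n)) : Prop :=
  ∃ m : Multiset (Pt n × Pt n),
    m.map Prod.fst = B ∧ m.map Prod.snd = C ∧ ∀ p ∈ m, dist p.1 p.2 ≤ ε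

/-- The bottleneck distance between barcodes. -/
def bottleneckDist (B C : Multiset (Pt n)) : ℝ≥0∞ :=
  sInf { e : ℝ≥0∞ | ∃ ε : ℝ, 0 ≤ ε ∧ e = ENNReal.ofReal ε ∧ IsMatching ε B C }

/-- A signed barcode: a pair (positive part, negative part) of barcodes. -/
abbrev SignedBarcode (n : ℕ) := Multiset (Pt n) × Multiset (Pt n)

/-- The bottleneck dissimilarity on signed barcodes. -/
def dBhat (B C : SignedBarcode n) : ℝ≥0∞ :=
  bottleneckDist (B.1 + C.2) (C.1 + B.2)

/-- Binary direct sum of persistence modules. -/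
def PersMod.dsum (M N : PersMod k n) : PersMod k n where
  X r := M.X r × N.X r
  map h := (M.map h).prodMap (N.map h)
  map_id r := by
    apply LinearMap.ext; intro x
    show (M.map (le_refl r) x.1, N.map (le_refl r) x.2) = x
    rw [M.map_id, N.map_id]; rfl
  map_comp {r s t} h₁ h₂ := by
    apply LinearMap.ext; intro x
    show (M.map h₂ (M.map h₁ x.1), N.map h₂ (N.map h₁ x.2))
        = (M.map (h₁.trans h₂) x.1, N.map (h₁.trans h₂) x.2)
    rw [← M.map_comp h₁ h₂, ← N.map_comp h₁ h₂]; rfl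

/-- Finite direct sum of persistence modules. -/
def dsumFin {m : ℕ} (P : Fin m → PersMod k n) : PersMod k n where
  X r := ∀ j, (P j).X r
  map h := LinearMap.pi fun j => ((P j).map h).comp (LinearMap.proj j)
  map_id r := by
    apply LinearMap.ext; intro x; funext j
    show (P j).map (le_refl r) (x j) = x j
    rw [(P j).map_id]; rfl
  map_comp {r s t} h₁ h₂ := by
    apply LinearMap.ext; intro x; funext j
    show (P j).map h₂ ((P j).map h₁ (x j)) = (P j).map (h₁.trans h₂) (x j)
    rw [← (P j).map_comp h₁ h₂]; rfl

/-- The zero persistence module. -/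
def zeroMod : PersMod k n := freeModFin (fun i : Fin 0 => i.elim0)

/-- The Hilbert function of a persistence module. -/
def Hil (M : PersMod k n) (r : Pt n) : ℕ := Module.finrank k (M.X r)

/-- Number of points of `B` (with multiplicity) that are `≤ r`. -/
def countLe (B : Multiset (Pt n)) (r : Pt n) : ℕ := Multiset.card (B.filter (fun i => i ≤ r))

/-- `R` is a free resolution of `M` with barcodes `B j`. -/
def IsFreeRes {M : PersMod k n} (R : Res M) (B : ℕ → Multiset (Pt n)) : Prop :=
  ∀ j, IsFreeWith (R.P j) (B j)

/-- `R` is a minimal free resolution of `M` with barcodes `B j`: in every homological degree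
its term has minimal rank among all free resolutions of `M`. -/
def IsMinFreeRes {M : PersMod k n} (R : Res M) (B : ℕ → Multiset (Pt n)) : Prop :=
  IsFreeRes R B ∧
  ∀ (R' : Res M) (B' : ℕ → Multiset (Pt n)), IsFreeRes R' B' →
    ∀ j, Multiset.card (B j) ≤ Multiset.card (B' j)

/-- Multiset union of the `B j` over even `j ≤ ℓ`. -/
def evenPart (B : ℕ → Multiset (Pt n)) (ℓ : ℕ) : Multiset (Pt n) :=
  ∑ j ∈ Finset.range (ℓ + 1), if Even j then B j else 0

/-- Multiset union of the `B j` over odd `j ≤ ℓ`. -/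
def oddPart (B : ℕ → Multiset (Pt n)) (ℓ : ℕ) : Multiset (Pt n) :=
  ∑ j ∈ Finset.range (ℓ + 1), if ¬ Even j then B j else 0

/-- `S` is the Betti signed barcode of `M`: the pair (even Betti numbers, odd Betti numbers)
coming from a minimal free resolution of `M`. -/
def IsBettiOf (M : PersMod k n) (S : SignedBarcode n) : Prop :=
  ∃ (R : Res M) (B : ℕ → Multiset (Pt n)), IsMinFreeRes R B ∧
    S = (evenPart B R.len, oddPart B R.len)

/-- `(P, Q)` (with barcodes `BP`, `BQ`) is a minimal Hilbert decomposition of `η`. -/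
def IsMinHilbDecomp (η : Pt n → ℤ) (P Q : PersMod k n) (BP BQ : Multiset (Pt n)) : Prop :=
  IsFreeWith P BP ∧ IsFreeWith Q BQ ∧
  (∀ r, η r = (Hil P r : ℤ) - (Hil Q r : ℤ)) ∧
  ∀ x : Pt n, ¬ (x ∈ BP ∧ x ∈ BQ)

/-- The `ℓ¹`-distance on `R^n`. -/
def l1dist (x y : Pt n) : ℝ := ∑ i, |x i - y i|

/-- The 1-Wasserstein cost of a matching (encoded as a multiset of pairs). -/
def matchCost (m : Multiset (Pt n × Pt n)) : ℝ := (m.map fun p => l1dist p.1 p.2).sum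

/-- The 1-Wasserstein distance between barcodes. -/
def wassDist (B C : Multiset (Pt n)) : ℝ≥0∞ :=
  sInf { e : ℝ≥0∞ | ∃ m : Multiset (Pt n × Pt n),
    m.map Prod.fst = B ∧ m.map Prod.snd = C ∧ e = ENNReal.ofReal (matchCost m) }

/-- The signed 1-Wasserstein distance on signed barcodes. -/
def dW1hat (B C : SignedBarcode n) : ℝ≥0∞ := wassDist (B.1 + C.2) (C.1 + B.2)

/-- The reduction of a signed barcode: cancel common points with multiplicity. -/
def reduceSB (B : SignedBarcode n) : SignedBarcode n := (B.1 - B.2, B.2 - B.1)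

/-! ### Auxiliary lemmas -/

section Aux

variable {k : Type} [Field k] {n : ℕ}

lemma aux_hil_eq_of_iso {M N : PersMod k n} (h : PersIso M N) (r : Pt n) :
    Module.finrank k (M.X r) = Module.finrank k (N.X r) := by
  obtain ⟨f, g, hgf, hfg⟩ := h
  exact LinearEquiv.finrank_eq (LinearEquiv.ofLinear (f.app r) (g.app r) (hfg r) (hgf r))

lemma aux_freeModFin_finrank {m : ℕ} (L : Fin m → Pt n) (r : Pt n) :
    Module.finrank k ((freeModFin (k := k) L).X r) = countLe (↑(List.ofFn L)) r := by
  classical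
  show Module.finrank k ({i : Fin m // L i ≤ r} → k) = _
  rw [Module.finrank_pi, Fintype.card_subtype]
  unfold countLe
  rw [List.ofFn_eq_map]
  simp [Finset.card, Finset.filter, Multiset.filter_map, Function.comp]
  have h : (Finset.univ.val : Multiset (Fin m)) = ↑(List.finRange m) := rfl
  rw [h, List.filter_map, List.length_map]
  simp [Multiset.filter_coe]
  rfl

lemma aux_hil_of_freeWith {P : PersMod k n} {B : Multiset (Pt n)}
    (h : IsFreeWith P B) (r : Pt n) :
    Module.finrank k (P.X r) = countLe B r := by
  obtain ⟨m, L, hBL, hiso⟩ := h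
  rw [aux_hil_eq_of_iso hiso r, aux_freeModFin_finrank, hBL]

lemma aux_freeModFin_map_inj {m : ℕ} (L : Fin m → Pt n) {r s : Pt n} (h : r ≤ s) :
    Function.Injective ((freeModFin (k := k) L).map h) := by
  intro f g hfg
  funext i
  have h1 := congrFun hfg ⟨i.1, i.2.trans h⟩
  show f i = g i
  have h2 : ∀ f' : {i : Fin m // L i ≤ r} → k,
      (freeModFin (k := k) L).map h f' ⟨i.1, i.2.trans h⟩ = f' i := by
    intro f'
    show (if h' : L i.1 ≤ r then f' ⟨i.1, h'⟩ else 0) = f' i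
    rw [dif_pos i.2]
  rw [h2 f, h2 g] at h1
  exact h1

lemma aux_map_inj_of_freeWith {P : PersMod k n} {B : Multiset (Pt n)}
    (hPB : IsFreeWith P B) {r s : Pt n} (h : r ≤ s) :
    Function.Injective (P.map h) := by
  obtain ⟨m, L, hBL, f, g, hgf, hfg⟩ := hPB
  have hginj : ∀ u, Function.Injective (g.app u) := by
    intro u
    apply Function.LeftInverse.injective (g := (f.app u))
    intro x
    exact congrArg (fun φ : _ →ₗ[k] _ => φ x) (hfg u)
  have hfinj : ∀ u, Function.Injective (f.app u) := by
    intro u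
    apply Function.LeftInverse.injective (g := (g.app u))
    intro x
    exact congrArg (fun φ : _ →ₗ[k] _ => φ x) (hgf u)
  have hx : ∀ z, P.map h z = g.app s ((freeModFin L).map h (f.app r z)) := by
    intro z
    have h2 : g.app r (f.app r z) = z :=
      congrArg (fun φ : _ →ₗ[k] _ => φ z) (hgf r)
    conv_lhs => rw [← h2]
    exact congrArg (fun φ : _ →ₗ[k] _ => φ (f.app r z)) (g.natural h)
  intro x y hxy
  rw [hx x, hx y] at hxy
  exact hfinj r (aux_freeModFin_map_inj L h (hginj s hxy))

lemma aux_res_dim {M : PersMod k n} (R : Res M) (hlen : R.len ≤ 1) (r : Pt n) :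
    Module.finrank k (M.X r) + Module.finrank k ((R.P 1).X r)
      = Module.finrank k ((R.P 0).X r) := by
  have hinj : Function.Injective ((R.d 0).app r) := by
    rw [← LinearMap.ker_eq_bot, ← R.exact_succ 0 r, eq_bot_iff]
    rintro y ⟨x, rfl⟩
    have hx : x = 0 := R.vanish 2 (by omega) r x
    simp [hx]
  have h1 := LinearMap.finrank_range_add_finrank_ker ((R.aug).app r)
  rw [LinearMap.range_eq_top.mpr (R.aug_surj r), finrank_top, ← R.exact_zero r,
    LinearMap.finrank_range_of_inj hinj] at h1
  exact h1

lemma aux_resA {M : PersMod k n} (R : Res M)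
    {BB : ℕ → Multiset (Pt n)} (hfree : IsFreeRes R BB)
    {r s : Pt n} (h : r ≤ s) :
    Module.finrank k ((R.P 0).X r)
      ≤ Module.finrank k (LinearMap.range (M.map h)) + Module.finrank k ((R.P 1).X s) := by
  set φ : (R.P 0).X r →ₗ[k] M.X s := ((R.aug).app s).comp ((R.P 0).map h) with hφ
  have hr : LinearMap.range φ ≤ LinearMap.range (M.map h) := by
    have h3 : φ = (M.map h).comp ((R.aug).app r) := (R.aug.natural h).symm
    rw [h3]
    exact LinearMap.range_comp_le_range _ _
  have hker : Module.finrank k (LinearMap.ker φ) ≤ Module.finrank k ((R.P 1).X s) := by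
    have hsub : ∀ x : LinearMap.ker φ,
        ((R.P 0).map h) x.1 ∈ LinearMap.range ((R.d 0).app s) := by
      intro x
      rw [R.exact_zero s]
      exact x.2
    set ψ : LinearMap.ker φ →ₗ[k] LinearMap.range ((R.d 0).app s) :=
      LinearMap.codRestrict _ (((R.P 0).map h).comp (LinearMap.ker φ).subtype) hsub with hψ
    have hψinj : Function.Injective ψ := by
      intro x y hxy
      have h4 : ((R.P 0).map h) x.1 = ((R.P 0).map h) y.1 := congrArg Subtype.val hxy
      exact Subtype.ext (aux_map_inj_of_freeWith (hfree 0) h h4)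
    calc Module.finrank k (LinearMap.ker φ)
        ≤ Module.finrank k (LinearMap.range ((R.d 0).app s)) :=
          LinearMap.finrank_le_finrank_of_injective hψinj
      _ ≤ Module.finrank k ((R.P 1).X s) := LinearMap.finrank_range_le _
  have h5 := LinearMap.finrank_range_add_finrank_ker φ
  have h6 : Module.finrank k (LinearMap.range φ)
      ≤ Module.finrank k (LinearMap.range (M.map h)) := Submodule.finrank_mono hr
  omega

lemma aux_interleave_rank {ε : ℝ} {M N : PersMod k n} (hMN : Interleaved ε M N)
    (r : Pt n) (h2 : r ≤ shiftPt ε (shiftPt ε r)) :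
    Module.finrank k (LinearMap.range (M.map h2))
      ≤ Module.finrank k (N.X (shiftPt ε r)) := by
  obtain ⟨hε, f, g, c1, c2⟩ := hMN
  have hc : M.map h2 = (g.app (shiftPt ε r)).comp (f.app r) := (c1 r).symm
  rw [hc]
  calc Module.finrank k (LinearMap.range ((g.app (shiftPt ε r)).comp (f.app r)))
      ≤ Module.finrank k (LinearMap.range (g.app (shiftPt ε r))) :=
        Submodule.finrank_mono (LinearMap.range_comp_le_range _ _)
    _ ≤ Module.finrank k (N.X (shiftPt ε r)) := LinearMap.finrank_range_le _

lemma aux_interleaved_symm {ε : ℝ} {M N : PersMod k n} (h : Interleaved ε M N) :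
    Interleaved ε N M := by
  obtain ⟨hε, f, g, c1, c2⟩ := h
  exact ⟨hε, g, f, c2, c1⟩

lemma aux_countLe_mono (B : Multiset (Pt n)) {r s : Pt n} (h : r ≤ s) :
    countLe B r ≤ countLe B s := by
  apply Multiset.card_le_card
  apply Multiset.monotone_filter_right
  intro a ha
  exact le_trans ha h

lemma aux_key_ineq {ε : ℝ} {M N : PersMod k n} (hMN : Interleaved ε M N)
    (RM : Res M) (RN : Res N) (hRM : RM.len ≤ 1) (hRN : RN.len ≤ 1)
    (B C : ℕ → Multiset (Pt n)) (hB : IsFreeRes RM B) (hC : IsFreeRes RN C) (r : Pt n) :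
    countLe (B 0) r + countLe (C 1) r
      ≤ countLe (C 0) (shiftPt ε (shiftPt ε r)) + countLe (B 1) (shiftPt ε (shiftPt ε r)) := by
  obtain ⟨hε, -⟩ := id hMN
  have hru : r ≤ shiftPt ε r := le_shiftPt hε r
  have hus : shiftPt ε r ≤ shiftPt ε (shiftPt ε r) := le_shiftPt hε (shiftPt ε r)
  have hrs : r ≤ shiftPt ε (shiftPt ε r) := hru.trans hus
  have h1 : countLe (B 0) r ≤ Module.finrank k (LinearMap.range (M.map hrs))
      + countLe (B 1) (shiftPt ε (shiftPt ε r)) := by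
    rw [← aux_hil_of_freeWith (hB 0) r, ← aux_hil_of_freeWith (hB 1) (shiftPt ε (shiftPt ε r))]
    exact aux_resA RM hB hrs
  have h2 := aux_interleave_rank hMN r hrs
  have h3 : Module.finrank k (N.X (shiftPt ε r)) + countLe (C 1) (shiftPt ε r)
      = countLe (C 0) (shiftPt ε r) := by
    rw [← aux_hil_of_freeWith (hC 0) (shiftPt ε r), ← aux_hil_of_freeWith (hC 1) (shiftPt ε r)]
    exact aux_res_dim RN hRN (shiftPt ε r)
  have h4 : countLe (C 1) r ≤ countLe (C 1) (shiftPt ε r) := aux_countLe_mono _ hru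
  have h5 : countLe (C 0) (shiftPt ε r) ≤ countLe (C 0) (shiftPt ε (shiftPt ε r)) :=
    aux_countLe_mono _ hus
  omega

lemma aux_matching_of_counts (δ : ℝ) :
    ∀ (nn : ℕ) (U V : Multiset ℝ), Multiset.card U = nn →
    (∀ t : ℝ, Multiset.card (U.filter (· ≤ t)) ≤ Multiset.card (V.filter (· ≤ t + δ))) →
    (∀ t : ℝ, Multiset.card (V.filter (· ≤ t)) ≤ Multiset.card (U.filter (· ≤ t + δ))) →
    ∃ m : Multiset (ℝ × ℝ), m.map Prod.fst = U ∧ m.map Prod.snd = V ∧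
      ∀ p ∈ m, |p.1 - p.2| ≤ δ := by
  intro nn
  induction nn with
  | zero =>
    intro U V hcard hUV hVU
    have hU : U = 0 := Multiset.card_eq_zero.mp hcard
    have hV : V = 0 := by
      by_contra hV
      obtain ⟨x, hx⟩ := Multiset.exists_mem_of_ne_zero hV
      have h1 := hVU x
      rw [hU] at h1
      simp at h1
      have h2 : x ∈ V.filter (· ≤ x) := Multiset.mem_filter.mpr ⟨hx, le_refl x⟩
      exact lt_irrefl x (h1 x hx)
    exact ⟨0, by simp [hU], by simp [hV], by simp⟩
  | succ nn ih =>
    intro U V hcard hUV hVU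
    have hUne : U ≠ 0 := by
      intro h; rw [h] at hcard; simp at hcard
    have hUfs : U.toFinset.Nonempty := by
      obtain ⟨x, hx⟩ := Multiset.exists_mem_of_ne_zero hUne
      exact ⟨x, Multiset.mem_toFinset.mpr hx⟩
    set u : ℝ := U.toFinset.min' hUfs with hu
    have huU : u ∈ U := Multiset.mem_toFinset.mp (U.toFinset.min'_mem hUfs)
    have humin : ∀ y ∈ U, u ≤ y := fun y hy =>
      U.toFinset.min'_le y (Multiset.mem_toFinset.mpr hy)
    have hVne : V ≠ 0 := by
      intro h
      have h1 := hUV u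
      rw [h] at h1
      simp at h1
      have h2 : u ∈ U.filter (· ≤ u) := Multiset.mem_filter.mpr ⟨huU, le_refl u⟩
      exact lt_irrefl u (h1 u huU)
    have hVfs : V.toFinset.Nonempty := by
      obtain ⟨x, hx⟩ := Multiset.exists_mem_of_ne_zero hVne
      exact ⟨x, Multiset.mem_toFinset.mpr hx⟩
    set v : ℝ := V.toFinset.min' hVfs with hv
    have hvV : v ∈ V := Multiset.mem_toFinset.mp (V.toFinset.min'_mem hVfs)
    have hvmin : ∀ y ∈ V, v ≤ y := fun y hy =>
      V.toFinset.min'_le y (Multiset.mem_toFinset.mpr hy)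
    -- v ≤ u + δ
    have hvu : v ≤ u + δ := by
      have h1 := hUV u
      have h2 : u ∈ U.filter (· ≤ u) := Multiset.mem_filter.mpr ⟨huU, le_refl u⟩
      have h3 : 0 < Multiset.card (V.filter (· ≤ u + δ)) := by
        have := Multiset.card_pos_iff_exists_mem.mpr ⟨u, h2⟩
        omega
      obtain ⟨y, hy⟩ := Multiset.card_pos_iff_exists_mem.mp h3
      obtain ⟨hyV, hyle⟩ := Multiset.mem_filter.mp hy
      exact le_trans (hvmin y hyV) hyle
    have huv : u ≤ v + δ := by
      have h1 := hVU v
      have h2 : v ∈ V.filter (· ≤ v) := Multiset.mem_filter.mpr ⟨hvV, le_refl v⟩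
      have h3 : 0 < Multiset.card (U.filter (· ≤ v + δ)) := by
        have := Multiset.card_pos_iff_exists_mem.mpr ⟨v, h2⟩
        omega
      obtain ⟨y, hy⟩ := Multiset.card_pos_iff_exists_mem.mp h3
      obtain ⟨hyU, hyle⟩ := Multiset.mem_filter.mp hy
      exact le_trans (humin y hyU) hyle
    set U' : Multiset ℝ := U.erase u with hU'
    set V' : Multiset ℝ := V.erase v with hV'
    have hUcons : U = u ::ₘ U' := (Multiset.cons_erase huU).symm
    have hVcons : V = v ::ₘ V' := (Multiset.cons_erase hvV).symm
    have hcard' : Multiset.card U' = nn := by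
      have := congrArg Multiset.card hUcons
      simp at this
      omega
    have hUV' : ∀ t : ℝ, Multiset.card (U'.filter (· ≤ t))
        ≤ Multiset.card (V'.filter (· ≤ t + δ)) := by
      intro t
      by_cases ht : u ≤ t
      · have h1 := hUV t
        rw [hUcons, Multiset.filter_cons_of_pos _ (by simpa using ht)] at h1
        rw [hVcons, Multiset.filter_cons_of_pos (a := v)
          (p := fun x => x ≤ t + δ) V' (by show v ≤ t + δ; linarith [hvu])] at h1
        simp at h1
        omega
      · have h0 : U'.filter (· ≤ t) = 0 := by
          rw [Multiset.filter_eq_nil]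
          intro a ha
          have haU : a ∈ U := Multiset.mem_of_mem_erase ha
          intro hat
          exact ht (le_trans (humin a haU) (by simpa using hat))
        rw [h0]
        simp
    have hVU' : ∀ t : ℝ, Multiset.card (V'.filter (· ≤ t))
        ≤ Multiset.card (U'.filter (· ≤ t + δ)) := by
      intro t
      by_cases ht : v ≤ t
      · have h1 := hVU t
        rw [hVcons, Multiset.filter_cons_of_pos _ (by simpa using ht)] at h1
        rw [hUcons, Multiset.filter_cons_of_pos (a := u)
          (p := fun x => x ≤ t + δ) U' (by show u ≤ t + δ; linarith [huv])] at h1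
        simp at h1
        omega
      · have h0 : V'.filter (· ≤ t) = 0 := by
          rw [Multiset.filter_eq_nil]
          intro a ha
          have haV : a ∈ V := Multiset.mem_of_mem_erase ha
          intro hat
          exact ht (le_trans (hvmin a haV) (by simpa using hat))
        rw [h0]
        simp
    obtain ⟨m', hm1, hm2, hm3⟩ := ih U' V' hcard' hUV' hVU'
    refine ⟨(u, v) ::ₘ m', ?_, ?_, ?_⟩
    · rw [Multiset.map_cons, hm1, ← hUcons]
    · rw [Multiset.map_cons, hm2, ← hVcons]
    · intro p hp
      rcases Multiset.mem_cons.mp hp with h | h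
      · subst h
        rw [abs_le]
        constructor <;> simp <;> linarith
      · exact hm3 p h

/-- Embed a real number as a point of `R^1`. -/
def cP (x : ℝ) : Pt 1 := fun _ => x

/-- Project a point of `R^1` to a real number. -/
def eP (p : Pt 1) : ℝ := p 0

lemma aux_le_cP (p : Pt 1) (t : ℝ) : p ≤ cP t ↔ eP p ≤ t := by
  constructor
  · intro h; exact h 0
  · intro h i
    have h2 : p i = p 0 := congrArg p (Subsingleton.elim i 0)
    rw [h2]; exact h

lemma aux_filter_map_eP (W : Multiset (Pt 1)) (t : ℝ) :
    Multiset.card ((W.map eP).filter (· ≤ t)) = countLe W (cP t) := by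
  classical
  rw [Multiset.filter_map, Multiset.card_map]
  unfold countLe
  congr 1
  apply Multiset.filter_congr
  intro p hp
  show eP p ≤ t ↔ p ≤ cP t
  exact (aux_le_cP p t).symm

lemma aux_map_cP_eP (W : Multiset (Pt 1)) : (W.map eP).map cP = W := by
  rw [Multiset.map_map]
  conv_rhs => rw [← Multiset.map_id W]
  apply Multiset.map_congr rfl
  intro p hp
  funext i
  exact congrArg p (Subsingleton.elim 0 i)

lemma aux_countLe_add (A B : Multiset (Pt n)) (r : Pt n) :
    countLe (A + B) r = countLe A r + countLe B r := by
  unfold countLe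
  rw [Multiset.filter_add, Multiset.card_add]

lemma aux_shift_cP (ε t : ℝ) : shiftPt ε (shiftPt ε (cP t)) = cP (t + 2 * ε) := by
  funext i
  show t + ε + ε = t + 2 * ε
  ring

end Aux

/-- **Remark 3.3** (one-parameter case). If `M, N : R → vec` are finitely presentable and
`ε`-interleaved, with minimal free resolutions `0 → P₁ → P₀ → M → 0` and
`0 → Q₁ → Q₀ → N → 0`, then there is a `2ε`-bijection between `ℬ(P₀) ∪ ℬ(Q₁)` and
`ℬ(Q₀) ∪ ℬ(P₁)`; that is, `d̂_B(ℬβ(M), ℬβ(N)) ≤ 2 d_I(M, N)`. -/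
theorem one_parameter_betti_stability
    {k : Type} [Field k] (ε : ℝ) (hε : 0 ≤ ε) (M N : PersMod k 1)
    (hM : FinitelyPresentable M) (hN : FinitelyPresentable N)
    (hMN : Interleaved ε M N)
    (RM : Res M) (RN : Res N) (hRM : RM.len ≤ 1) (hRN : RN.len ≤ 1)
    (B C : ℕ → Multiset (Pt 1))
    (hB : IsMinFreeRes RM B) (hC : IsMinFreeRes RN C) :
    IsMatching (2 * ε) (B 0 + C 1) (C 0 + B 1) := by
  classical
  have key1 : ∀ t : ℝ, countLe (B 0) (cP t) + countLe (C 1) (cP t)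
      ≤ countLe (C 0) (cP (t + 2 * ε)) + countLe (B 1) (cP (t + 2 * ε)) := by
    intro t
    have h := aux_key_ineq hMN RM RN hRM hRN B C hB.1 hC.1 (cP t)
    rwa [aux_shift_cP ε t] at h
  have key2 : ∀ t : ℝ, countLe (C 0) (cP t) + countLe (B 1) (cP t)
      ≤ countLe (B 0) (cP (t + 2 * ε)) + countLe (C 1) (cP (t + 2 * ε)) := by
    intro t
    have h := aux_key_ineq (aux_interleaved_symm hMN) RN RM hRN hRM C B hC.1 hB.1 (cP t)
    rwa [aux_shift_cP ε t] at h
  set U : Multiset ℝ := (B 0 + C 1).map eP with hU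
  set V : Multiset ℝ := (C 0 + B 1).map eP with hV
  have hUV : ∀ t : ℝ, Multiset.card (U.filter (· ≤ t))
      ≤ Multiset.card (V.filter (· ≤ t + 2 * ε)) := by
    intro t
    rw [hU, hV, aux_filter_map_eP, aux_filter_map_eP, aux_countLe_add, aux_countLe_add]
    exact key1 t
  have hVU : ∀ t : ℝ, Multiset.card (V.filter (· ≤ t))
      ≤ Multiset.card (U.filter (· ≤ t + 2 * ε)) := by
    intro t
    rw [hU, hV, aux_filter_map_eP, aux_filter_map_eP, aux_countLe_add, aux_countLe_add]
    exact key2 t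
  obtain ⟨m', hm1, hm2, hm3⟩ :=
    aux_matching_of_counts (2 * ε) (Multiset.card U) U V rfl hUV hVU
  refine ⟨m'.map (fun p => (cP p.1, cP p.2)), ?_, ?_, ?_⟩
  · have h : (m'.map (fun p => (cP p.1, cP p.2))).map Prod.fst
        = (m'.map Prod.fst).map cP := by
      rw [Multiset.map_map, Multiset.map_map]; rfl
    rw [h, hm1, hU, aux_map_cP_eP]
  · have h : (m'.map (fun p => (cP p.1, cP p.2))).map Prod.snd
        = (m'.map Prod.snd).map cP := by
      rw [Multiset.map_map, Multiset.map_map]; rfl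
    rw [h, hm2, hV, aux_map_cP_eP]
  · intro p hp
    obtain ⟨q, hq, hqp⟩ := Multiset.mem_map.mp hp
    rw [← hqp]
    rw [dist_pi_le_iff (by linarith)]
    intro i
    show dist q.1 q.2 ≤ 2 * ε
    rw [Real.dist_eq]
    exact hm3 q hq

end
end

section
/- Bottleneck instability of minimal Hilbert decompositions (Example 5.4). For every real constant c ≥ 1 there exist finitely presentable 2-parameter persistence modules M and N such that, for the minimal Hilbert decompositions (P*, Q*) of Hil(M) and (P', Q') of Hil(N), one has d̂_B((ℬ(P*), ℬ(Q*)), (ℬ(P'), ℬ(Q'))) > c · d_I(M, N). Specifically, for every ε > 0 and m ∈ ℕ, the module M = ⊕_{j=0}^{m−1} L_{(jε,jε),((j+1)ε,(j+1)ε)} is ε/2-interleaved with the zero module; the pair (F_{(0,0)}, F_{(mε,mε)}) is a minimal Hilbert decomposition of Hil(M); and d̂_B(({(0,0)}, {(mε,mε)}), (∅, ∅)) = mε. -/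
set_option linter.unusedVariables false
set_option maxHeartbeats 800000

open scoped Classical ENNReal

noncomputable section

variable {k : Type} [Field k] {n : ℕ}

/-- The interval module `L_{a,b}` supported on `{x : a ≤ x ∧ ¬ b ≤ x}`. -/
def Lmod (a b : Pt 2) : PersMod k 2 where
  X r := PLift (a ≤ r ∧ ¬ b ≤ r) → k
  fd r := by
    haveI : Finite (PLift (a ≤ r ∧ ¬ b ≤ r)) := Finite.of_subsingleton
    haveI := Fintype.ofFinite (PLift (a ≤ r ∧ ¬ b ≤ r))
    infer_instance
  map {r s} h :=
    { toFun := fun f hs => if hr : (a ≤ r ∧ ¬ b ≤ r) then f ⟨hr⟩ else 0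
      map_add' := by
        intro f g; funext hs
        by_cases hr : (a ≤ r ∧ ¬ b ≤ r) <;> simp [hr]
      map_smul' := by
        intro c f; funext hs
        by_cases hr : (a ≤ r ∧ ¬ b ≤ r) <;> simp [hr] }
  map_id r := by
    apply LinearMap.ext; intro f; funext hs
    show (if hr : (a ≤ r ∧ ¬ b ≤ r) then f ⟨hr⟩ else 0) = f hs
    rw [dif_pos hs.down]
  map_comp {r s t} h₁ h₂ := by
    apply LinearMap.ext; intro f; funext ht
    show (if hs : (a ≤ s ∧ ¬ b ≤ s) then
            (if hr : (a ≤ r ∧ ¬ b ≤ r) then f ⟨hr⟩ else 0) else 0)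
        = (if hr : (a ≤ r ∧ ¬ b ≤ r) then f ⟨hr⟩ else 0)
    by_cases hr : (a ≤ r ∧ ¬ b ≤ r)
    · have hs : (a ≤ s ∧ ¬ b ≤ s) :=
        ⟨hr.1.trans h₁, fun hb => ht.down.2 (hb.trans h₂)⟩
      simp [hr, hs]
    · simp [hr]

/-- The point `(c, c)`. -/
def constPt (c : ℝ) : Pt 2 := fun _ => c

/-- The module `M = ⊕_{j=0}^{m-1} L_{(jε,jε),((j+1)ε,(j+1)ε)}` of Example 5.4. -/
def Mex (k : Type) [Field k] (ε : ℝ) (m : ℕ) : PersMod k 2 :=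
  dsumFin fun j : Fin m =>
    Lmod (constPt ((j : ℕ) * ε)) (constPt (((j : ℕ) + 1) * ε))
-- ===== auxiliary lemmas =====

section Aux
variable {k : Type} [Field k]

/-- identity morphism -/
def idHom (M : PersMod k n) : PersHom M M :=
  ⟨fun _ => LinearMap.id, fun h => by simp⟩

lemma persIso_refl (M : PersMod k n) : PersIso M M :=
  ⟨idHom M, idHom M, fun r => by rfl, fun r => by rfl⟩

lemma isFreeWith_self {m : ℕ} (L : Fin m → Pt n) :
    IsFreeWith (freeModFin L : PersMod k n) (List.ofFn L : Multiset (Pt n)) :=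
  ⟨m, L, rfl, persIso_refl _⟩

lemma constPt_le_iff (c : ℝ) (r : Pt 2) : constPt c ≤ r ↔ c ≤ min (r 0) (r 1) := by
  constructor
  · intro h; exact le_min (h 0) (h 1)
  · intro h i
    fin_cases i
    · exact h.trans (min_le_left _ _)
    · exact h.trans (min_le_right _ _)

lemma finrank_unique_fun (ι : Type) [Unique ι] : Module.finrank k (ι → k) = 1 := by
  rw [(LinearEquiv.funUnique ι k k).finrank_eq, Module.finrank_self]

lemma finrank_empty_fun (ι : Type) [IsEmpty ι] : Module.finrank k (ι → k) = 0 := by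
  haveI : Subsingleton (ι → k) := inferInstance
  exact Module.finrank_zero_of_subsingleton

lemma finrank_plift_fun_pos {p : Prop} (hp : p) : Module.finrank k (PLift p → k) = 1 := by
  haveI : Unique (PLift p) := ⟨⟨⟨hp⟩⟩, fun x => rfl⟩
  exact finrank_unique_fun _

lemma finrank_plift_fun_neg {p : Prop} (hp : ¬ p) : Module.finrank k (PLift p → k) = 0 := by
  haveI : IsEmpty (PLift p) := ⟨fun x => hp x.down⟩
  exact finrank_empty_fun _

lemma finrank_sub1_fun_pos {p : Prop} (hp : p) :
    Module.finrank k ({i : Fin 1 // p} → k) = 1 := by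
  haveI : Unique {i : Fin 1 // p} := ⟨⟨0, hp⟩, fun x => Subtype.ext (Subsingleton.elim _ _)⟩
  exact finrank_unique_fun _

lemma finrank_sub1_fun_neg {p : Prop} (hp : ¬ p) :
    Module.finrank k ({i : Fin 1 // p} → k) = 0 := by
  haveI : IsEmpty {i : Fin 1 // p} := ⟨fun x => hp x.2⟩
  exact finrank_empty_fun _

lemma hil_free1 (c : ℝ) (r : Pt 2) :
    Hil (freeModFin (fun _ : Fin 1 => constPt c) : PersMod k 2) r
      = if constPt c ≤ r then 1 else 0 := by
  by_cases h : constPt c ≤ r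
  · rw [if_pos h]; exact finrank_sub1_fun_pos h
  · rw [if_neg h]; exact finrank_sub1_fun_neg h

lemma hil_dsumFin {m : ℕ} (P : Fin m → PersMod k n) (r : Pt n) :
    Hil (dsumFin P) r = ∑ j, Hil (P j) r := by
  exact Module.finrank_pi_fintype k

lemma hil_L (a b : Pt 2) (r : Pt 2) :
    Hil (Lmod a b : PersMod k 2) r = if (a ≤ r ∧ ¬ b ≤ r) then 1 else 0 := by
  by_cases h : (a ≤ r ∧ ¬ b ≤ r)
  · rw [if_pos h]; exact finrank_plift_fun_pos h
  · rw [if_neg h]; exact finrank_plift_fun_neg h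

lemma hil_Mex (ε : ℝ) (m : ℕ) (r : Pt 2) :
    Hil (Mex k ε m) r
      = ∑ j : Fin m, if (constPt ((j : ℕ) * ε) ≤ r ∧ ¬ constPt (((j : ℕ) + 1) * ε) ≤ r)
          then 1 else 0 := by
  rw [Mex, hil_dsumFin]
  exact Finset.sum_congr rfl fun j _ => hil_L _ _ _

lemma zeroMod_subsingleton (r : Pt n) : Subsingleton ((zeroMod : PersMod k n).X r) := by
  haveI : IsEmpty {i : Fin 0 // (fun i : Fin 0 => i.elim0) i ≤ r} := ⟨fun x => x.1.elim0⟩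
  exact (inferInstance : Subsingleton ({i : Fin 0 // (fun i : Fin 0 => i.elim0) i ≤ r} → k))

lemma hil_zeroMod (r : Pt n) : Hil (zeroMod : PersMod k n) r = 0 := by
  haveI := zeroMod_subsingleton (k := k) r
  exact Module.finrank_zero_of_subsingleton

lemma isFreeWith_zero : IsFreeWith (zeroMod : PersMod k n) 0 :=
  ⟨0, fun i => i.elim0, by simp, persIso_refl _⟩

end Aux
section Aux2
variable {k : Type} [Field k]

lemma constPt_mono {a b : ℝ} (h : a ≤ b) : constPt a ≤ constPt b := fun i => h

lemma hil_Mex_eq (ε : ℝ) (hε : 0 ≤ ε) (m : ℕ) (r : Pt 2) :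
    (Hil (Mex k ε m) r : ℤ)
      = (if constPt 0 ≤ r then (1 : ℤ) else 0)
        - (if constPt ((m : ℝ) * ε) ≤ r then (1 : ℤ) else 0) := by
  rw [hil_Mex]
  push_cast
  set a : ℕ → ℤ := fun j => if constPt ((j : ℝ) * ε) ≤ r then (1 : ℤ) else 0 with ha
  have key : ∀ j : Fin m,
      (if (constPt ((j : ℕ) * ε) ≤ r ∧ ¬ constPt (((j : ℕ) + 1) * ε) ≤ r)
        then (1 : ℤ) else 0) = a (j : ℕ) - a ((j : ℕ) + 1) := by
    intro j
    have hmono : constPt ((((j : ℕ) : ℝ) + 1) * ε) ≤ r → constPt (((j : ℕ) : ℝ) * ε) ≤ r := by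
      intro h
      exact le_trans (constPt_mono (by nlinarith)) h
    simp only [ha]
    push_cast
    by_cases h1 : constPt (((j : ℕ) : ℝ) * ε) ≤ r
    · by_cases h2 : constPt ((((j : ℕ) : ℝ) + 1) * ε) ≤ r
      · simp [h1, h2]
      · simp [h1, h2]
    · have h2 : ¬ constPt ((((j : ℕ) : ℝ) + 1) * ε) ≤ r := fun h => h1 (hmono h)
      simp [h1, h2]
  calc (∑ j : Fin m, if (constPt ((j : ℕ) * ε) ≤ r ∧ ¬ constPt (((j : ℕ) + 1) * ε) ≤ r)
        then (1 : ℤ) else 0)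
      = ∑ j : Fin m, (a (j : ℕ) - a ((j : ℕ) + 1)) := Finset.sum_congr rfl fun j _ => key j
    _ = ∑ j ∈ Finset.range m, (a j - a (j + 1)) := Fin.sum_univ_eq_sum_range (fun j => a j - a (j + 1)) m
    _ = a 0 - a m := Finset.sum_range_sub' a m
    _ = _ := by simp only [ha]; norm_num

end Aux2
section Aux3
variable {k : Type} [Field k]

lemma Mex_map_eq_zero (ε : ℝ) (m : ℕ) {r s : Pt 2} (h : r ≤ s)
    (hs : ∀ i, r i + ε ≤ s i) : (Mex k ε m).map h = 0 := by
  apply LinearMap.ext; intro x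
  funext j hp
  show (if hr : (constPt ((j : ℕ) * ε) ≤ r ∧ ¬ constPt (((j : ℕ) + 1) * ε) ≤ r)
      then x j ⟨hr⟩ else 0) = 0
  rw [dif_neg]
  rintro ⟨h1, h2⟩
  apply hp.down.2
  intro i
  have e1 : ((j : ℕ) : ℝ) * ε ≤ r i := h1 i
  have e2 : r i + ε ≤ s i := hs i
  show (((j : ℕ) : ℝ) + 1) * ε ≤ s i
  have e3 : (((j : ℕ) : ℝ) + 1) * ε = ((j : ℕ) : ℝ) * ε + ε := by ring
  rw [e3]
  exact le_trans (add_le_add e1 (le_refl ε)) e2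

lemma interleave_Mex (ε : ℝ) (hε : 0 < ε) (m : ℕ) :
    Interleaved (ε / 2) (Mex k ε m) (zeroMod : PersMod k 2) := by
  refine ⟨by linarith, ?_, ?_, ?_, ?_⟩
  · -- f : M → 0[ε/2]
    refine ⟨fun r => 0, fun {r s} h => ?_⟩
    apply LinearMap.ext; intro x
    exact @Subsingleton.elim _ (zeroMod_subsingleton (k := k) (shiftPt (ε/2) s)) _ _
  · -- g : 0 → M[ε/2]
    refine ⟨fun r => 0, fun {r s} h => ?_⟩
    simp
  · intro r
    refine (LinearMap.comp_zero _).trans ?_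
    symm
    exact Mex_map_eq_zero ε m _ (fun i => by simp [shiftPt]; linarith)
  · intro r
    apply LinearMap.ext; intro x
    exact @Subsingleton.elim _
      (zeroMod_subsingleton (k := k) (shiftPt (ε/2) (shiftPt (ε/2) r))) _ _

end Aux3
section Aux4
variable {k : Type} [Field k]

lemma dist_constPt (a b : ℝ) : dist (constPt a) (constPt b) = |a - b| := by
  apply le_antisymm
  · rw [dist_pi_le_iff (abs_nonneg _)]
    intro i
    simp [constPt, Real.dist_eq]
  · have := dist_le_pi_dist (constPt a) (constPt b) 0
    simpa [constPt, Real.dist_eq] using this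

lemma bottleneck_single (a b : Pt 2) :
    bottleneckDist ({a} : Multiset (Pt 2)) ({b} : Multiset (Pt 2))
      = ENNReal.ofReal (dist a b) := by
  apply le_antisymm
  · apply sInf_le
    refine ⟨dist a b, dist_nonneg, rfl, ({(a, b)} : Multiset (Pt 2 × Pt 2)), ?_, ?_, ?_⟩
    · simp
    · simp
    · intro p hp
      rw [Multiset.mem_singleton] at hp
      subst hp; exact le_refl _
  · apply le_sInf
    rintro e ⟨ε', h0, rfl, mm, hf, hsnd, hd⟩
    have hcard : Multiset.card mm = 1 := by
      have := congrArg Multiset.card hf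
      simpa using this
    obtain ⟨p, hp⟩ := Multiset.card_eq_one.mp hcard
    subst hp
    simp only [Multiset.map_singleton, Multiset.singleton_inj] at hf hsnd
    have := hd p (Multiset.mem_singleton_self p)
    rw [hf, hsnd] at this
    exact ENNReal.ofReal_le_ofReal this

lemma dBhat_single (a b : Pt 2) :
    dBhat (({a} : Multiset (Pt 2)), ({b} : Multiset (Pt 2))) (0, 0)
      = ENNReal.ofReal (dist a b) := by
  show bottleneckDist ({a} + 0) (0 + {b}) = _
  rw [add_zero, zero_add]
  exact bottleneck_single a b

end Aux4
section Aux5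
variable {k : Type} [Field k]

lemma fp_zeroMod : FinitelyPresentable (zeroMod : PersMod k n) := by
  refine ⟨0, 0, fun i => i.elim0, fun i => i.elim0, idHom _, idHom _, ?_, ?_⟩
  · intro x
    exact Function.surjective_id
  · intro x
    haveI := zeroMod_subsingleton (k := k) x
    apply le_antisymm
    · intro y hy
      rw [LinearMap.mem_ker]
      exact Subsingleton.elim _ _
    · intro y hy
      exact ⟨y, rfl⟩

end Aux5
section Aux6
variable {k : Type} [Field k]

/-- The quotient morphism from the free module on generators `(jε,jε)` to `Mex`. -/
def gQuot (ε : ℝ) (m : ℕ) :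
    PersHom (freeModFin (fun j : Fin m => constPt ((j : ℕ) * ε)) : PersMod k 2)
      (Mex k ε m) where
  app r :=
    { toFun := fun f j hp => f ⟨j, hp.down.1⟩
      map_add' := fun f g => rfl
      map_smul' := fun c f => rfl }
  natural {r s} h := by
    apply LinearMap.ext; intro f
    funext j hp
    show (if hr : (constPt ((j : ℕ) * ε) ≤ r ∧ ¬ constPt (((j : ℕ) + 1) * ε) ≤ r)
        then f ⟨j, hr.1⟩ else 0)
      = (if h' : constPt ((j : ℕ) * ε) ≤ r then f ⟨j, h'⟩ else 0)
    by_cases hbr : constPt (((j : ℕ) + 1) * ε) ≤ r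
    · exact absurd (le_trans hbr h) hp.down.2
    · by_cases har : constPt ((j : ℕ) * ε) ≤ r
      · rw [dif_pos ⟨har, hbr⟩, dif_pos har]
      · rw [dif_neg (fun hc => har hc.1), dif_neg har]

/-- The relations morphism. -/
def fRel (ε : ℝ) (hε : 0 ≤ ε) (m : ℕ) :
    PersHom (freeModFin (fun j : Fin m => constPt (((j : ℕ) + 1) * ε)) : PersMod k 2)
      (freeModFin (fun j : Fin m => constPt ((j : ℕ) * ε)) : PersMod k 2) where
  app r :=
    { toFun := fun f x => if hb : constPt (((x.1 : ℕ) + 1) * ε) ≤ r then f ⟨x.1, hb⟩ else 0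
      map_add' := by
        intro f g; funext x
        show (if h : constPt (((x.1 : ℕ) + 1) * ε) ≤ r then (f + g) ⟨x.1, h⟩ else 0)
          = ((if h : constPt (((x.1 : ℕ) + 1) * ε) ≤ r then f ⟨x.1, h⟩ else 0)
            + (if h : constPt (((x.1 : ℕ) + 1) * ε) ≤ r then g ⟨x.1, h⟩ else 0) : k)
        by_cases hb : constPt (((x.1 : ℕ) + 1) * ε) ≤ r
        · simp only [dif_pos hb]; rfl
        · simp only [dif_neg hb]; rw [add_zero]
      map_smul' := by
        intro c f; funext x
        show (if h : constPt (((x.1 : ℕ) + 1) * ε) ≤ r then (c • f) ⟨x.1, h⟩ else 0)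
          = (c • (if h : constPt (((x.1 : ℕ) + 1) * ε) ≤ r then f ⟨x.1, h⟩ else 0) : k)
        by_cases hb : constPt (((x.1 : ℕ) + 1) * ε) ≤ r
        · simp only [dif_pos hb]; rfl
        · simp only [dif_neg hb]; rw [smul_zero] }
  natural {r s} h := by
    apply LinearMap.ext; intro f
    funext x
    show (if h' : constPt ((x.1 : ℕ) * ε) ≤ r then
            (if hb : constPt (((x.1 : ℕ) + 1) * ε) ≤ r then f ⟨x.1, hb⟩ else 0) else 0)
      = (if hb : constPt (((x.1 : ℕ) + 1) * ε) ≤ s then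
            (if h' : constPt (((x.1 : ℕ) + 1) * ε) ≤ r then f ⟨x.1, h'⟩ else 0) else 0)
    by_cases hc : constPt (((x.1 : ℕ) + 1) * ε) ≤ r
    · have har : constPt ((x.1 : ℕ) * ε) ≤ r :=
        le_trans (constPt_mono (by nlinarith)) hc
      rw [dif_pos har, dif_pos hc, dif_pos (hc.trans h)]
    · rw [dif_neg hc]
      simp

lemma fp_Mex (ε : ℝ) (hε : 0 ≤ ε) (m : ℕ) : FinitelyPresentable (Mex k ε m) := by
  refine ⟨m, m, fun j => constPt (((j : ℕ) + 1) * ε), fun j => constPt ((j : ℕ) * ε),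
    fRel ε hε m, gQuot ε m, ?_, ?_⟩
  · -- surjectivity of gQuot
    intro r y
    refine ⟨fun x => if hc : constPt (((x.1 : ℕ) + 1) * ε) ≤ r then 0
      else y x.1 ⟨⟨x.2, hc⟩⟩, ?_⟩
    funext j hp
    show (if hc : constPt (((j : ℕ) + 1) * ε) ≤ r then 0
      else y j ⟨⟨hp.down.1, hc⟩⟩) = y j hp
    rw [dif_neg hp.down.2]
  · -- exactness
    intro r
    apply le_antisymm
    · rintro f0 ⟨f, rfl⟩
      rw [LinearMap.mem_ker]
      funext j hp
      show (if hb : constPt (((j : ℕ) + 1) * ε) ≤ r then f ⟨j, hb⟩ else 0) = 0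
      rw [dif_neg hp.down.2]
    · intro f0 hf0
      rw [LinearMap.mem_ker] at hf0
      refine ⟨fun x => f0 ⟨x.1, le_trans (constPt_mono (by nlinarith)) x.2⟩, ?_⟩
      funext x
      show (if hb : constPt (((x.1 : ℕ) + 1) * ε) ≤ r then
          f0 ⟨x.1, le_trans (constPt_mono (by nlinarith)) hb⟩ else 0) = f0 x
      by_cases hb : constPt (((x.1 : ℕ) + 1) * ε) ≤ r
      · rw [dif_pos hb]
      · rw [dif_neg hb]
        have := congrFun (congrFun hf0 x.1) ⟨⟨x.2, hb⟩⟩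
        exact this.symm

end Aux6
section Aux7
variable {k : Type} [Field k]

lemma isFreeWith_single (a : Pt 2) :
    IsFreeWith (freeModFin (fun _ : Fin 1 => a) : PersMod k 2) ({a} : Multiset (Pt 2)) :=
  ⟨1, fun _ => a, by simp, persIso_refl _⟩

lemma minHilb_Mex (ε : ℝ) (hε : 0 < ε) (m : ℕ) (hm : 1 ≤ m) :
    IsMinHilbDecomp (fun r => (Hil (Mex k ε m) r : ℤ))
      (freeModFin (fun _ : Fin 1 => constPt 0) : PersMod k 2)
      (freeModFin (fun _ : Fin 1 => constPt ((m : ℝ) * ε)) : PersMod k 2)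
      ({constPt 0} : Multiset (Pt 2)) ({constPt ((m : ℝ) * ε)} : Multiset (Pt 2)) := by
  refine ⟨isFreeWith_single _, isFreeWith_single _, fun r => ?_, fun x hx => ?_⟩
  · show (Hil (Mex k ε m) r : ℤ) = _
    rw [hil_Mex_eq ε hε.le m r, hil_free1, hil_free1]
    push_cast
    rfl
  · obtain ⟨h1, h2⟩ := hx
    rw [Multiset.mem_singleton] at h1 h2
    subst h1
    have := congrFun h2 0
    simp only [constPt] at this
    have hm' : (1 : ℝ) ≤ (m : ℝ) := by exact_mod_cast hm
    nlinarith

lemma dBhat_Mex (ε : ℝ) (hε : 0 < ε) (m : ℕ) :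
    dBhat (({constPt 0} : Multiset (Pt 2)), ({constPt ((m : ℝ) * ε)} : Multiset (Pt 2)))
        (0, 0) = ENNReal.ofReal ((m : ℝ) * ε) := by
  rw [dBhat_single, dist_constPt]
  rw [zero_sub, abs_neg, abs_of_nonneg (by positivity)]

end Aux7

/-- **Example 5.4** (bottleneck instability of minimal Hilbert decompositions).
There is no constant `c ≥ 1` with `d̂_B(ĤB(M), ĤB(N)) ≤ c · d_I(M, N)`; specifically,
for `ε > 0` and `m ≥ 1`, the module `M = ⊕_j L_{(jε,jε),((j+1)ε,(j+1)ε)}` is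
`ε/2`-interleaved with `0`, the pair `(F_{(0,0)}, F_{(mε,mε)})` is a minimal Hilbert
decomposition of `Hil(M)`, and `d̂_B(({(0,0)}, {(mε,mε)}), (∅, ∅)) = mε`. -/
theorem minimal_hilbert_decomposition_bottleneck_instability (k : Type) [Field k] :
    (∀ c : ℝ, 1 ≤ c → ∃ (M N : PersMod k 2),
      FinitelyPresentable M ∧ FinitelyPresentable N ∧
      ∃ (P Q P' Q' : PersMod k 2) (BP BQ BP' BQ' : Multiset (Pt 2)),
        IsMinHilbDecomp (fun r => (Hil M r : ℤ)) P Q BP BQ ∧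
        IsMinHilbDecomp (fun r => (Hil N r : ℤ)) P' Q' BP' BQ' ∧
        ENNReal.ofReal c * interleavingDist M N < dBhat (BP, BQ) (BP', BQ')) ∧
    (∀ ε : ℝ, 0 < ε → ∀ m : ℕ, 1 ≤ m →
      Interleaved (ε / 2) (Mex k ε m) (zeroMod : PersMod k 2) ∧
      IsMinHilbDecomp (fun r => (Hil (Mex k ε m) r : ℤ))
        (freeModFin (fun _ : Fin 1 => constPt 0) : PersMod k 2)
        (freeModFin (fun _ : Fin 1 => constPt ((m : ℝ) * ε)) : PersMod k 2)
        ({constPt 0} : Multiset (Pt 2)) ({constPt ((m : ℝ) * ε)} : Multiset (Pt 2)) ∧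
      dBhat (({constPt 0} : Multiset (Pt 2)), ({constPt ((m : ℝ) * ε)} : Multiset (Pt 2)))
          (0, 0)
        = ENNReal.ofReal ((m : ℝ) * ε)) := by
  constructor
  · intro c hc
    set m : ℕ := ⌈c⌉₊ + 1 with hm
    refine ⟨Mex k 1 m, zeroMod, fp_Mex 1 one_pos.le m, fp_zeroMod,
      freeModFin (fun _ : Fin 1 => constPt 0),
      freeModFin (fun _ : Fin 1 => constPt ((m : ℝ) * 1)), zeroMod, zeroMod,
      {constPt 0}, {constPt ((m : ℝ) * 1)}, 0, 0,
      minHilb_Mex 1 one_pos m (by omega), ?_, ?_⟩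
    · refine ⟨isFreeWith_zero, isFreeWith_zero, fun r => ?_, fun x hx => ?_⟩
      · show (Hil (zeroMod : PersMod k 2) r : ℤ)
            = (Hil (zeroMod : PersMod k 2) r : ℤ) - (Hil (zeroMod : PersMod k 2) r : ℤ)
        simp [hil_zeroMod]
      · exact absurd hx.1 (by simp)
    · have hle : interleavingDist (Mex k 1 m) (zeroMod : PersMod k 2)
          ≤ ENNReal.ofReal (1 / 2) :=
        sInf_le ⟨1 / 2, rfl, interleave_Mex 1 one_pos m⟩
      have hd := dBhat_Mex 1 one_pos m
      rw [hd]
      calc ENNReal.ofReal c * interleavingDist (Mex k 1 m) (zeroMod : PersMod k 2)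
          ≤ ENNReal.ofReal c * ENNReal.ofReal (1 / 2) := by
            exact mul_le_mul' le_rfl hle
        _ = ENNReal.ofReal (c * (1 / 2)) := (ENNReal.ofReal_mul (by linarith)).symm
        _ < ENNReal.ofReal ((m : ℝ) * 1) := by
            rw [ENNReal.ofReal_lt_ofReal_iff (by positivity)]
            have h1 : c ≤ (⌈c⌉₊ : ℝ) := Nat.le_ceil c
            have h2 : ((m : ℕ) : ℝ) = (⌈c⌉₊ : ℝ) + 1 := by rw [hm]; push_cast; ring
            nlinarith
  · intro ε hε m hm
    exact ⟨interleave_Mex ε hε m, minHilb_Mex ε hε m hm, dBhat_Mex ε hε m⟩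


end
end

section
/- Equality part of Theorem 1.5. Let M, N : R^n → vec be finitely presentable persistence modules. Let (P, Q) and (P', Q') be minimal Hilbert decompositions of Hil(M) and Hil(N), and let ℬβ(M) and ℬβ(N) be the Betti signed barcodes of M and N. Then d̂_{W¹}((ℬ(P), ℬ(Q)), (ℬ(P'), ℬ(Q'))) = d̂_{W¹}(ℬβ(M), ℬβ(N)). -/
set_option linter.unusedVariables false
set_option maxHeartbeats 800000

open scoped Classical ENNReal

noncomputable section

variable {k : Type} [Field k] {n : ℕ}

/-! ### Auxiliary lemmas -/

section Aux

variable {k : Type} [Field k] {n : ℕ}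

lemma hil_of_iso {M N : PersMod k n} (h : PersIso M N) (r : Pt n) : Hil M r = Hil N r := by
  obtain ⟨f, g, hgf, hfg⟩ := h
  exact LinearEquiv.finrank_eq (LinearEquiv.ofLinear (f.app r) (g.app r) (hfg r) (hgf r))

lemma countLe_zero (r : Pt n) : countLe (0 : Multiset (Pt n)) r = 0 := by
  simp [countLe]

lemma countLe_add (B C : Multiset (Pt n)) (r : Pt n) :
    countLe (B + C) r = countLe B r + countLe C r := by
  simp [countLe, Multiset.filter_add]

lemma countLe_cons (x : Pt n) (B : Multiset (Pt n)) (r : Pt n) :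
    countLe (x ::ₘ B) r = (if x ≤ r then 1 else 0) + countLe B r := by
  by_cases hx : x ≤ r
  · simp [countLe, Multiset.filter_cons, hx, Nat.add_comm]
  · simp [countLe, Multiset.filter_cons, hx]

lemma countLe_sum {ι : Type} (s : Finset ι) (f : ι → Multiset (Pt n)) (r : Pt n) :
    countLe (∑ j ∈ s, f j) r = ∑ j ∈ s, countLe (f j) r := by
  classical
  induction s using Finset.induction with
  | empty => simp [countLe]
  | insert _ _ hns ih => rw [Finset.sum_insert hns, countLe_add, ih, Finset.sum_insert hns]

lemma hil_freeModFin {m : ℕ} (L : Fin m → Pt n) (r : Pt n) :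
    Hil (freeModFin (k := k) L) r = countLe (List.ofFn L : Multiset (Pt n)) r := by
  classical
  have h1 : Hil (freeModFin (k := k) L) r = Fintype.card {i : Fin m // L i ≤ r} := by
    unfold Hil freeModFin
    exact Module.finrank_fintype_fun_eq_card k
  have h2 : (List.ofFn L : Multiset (Pt n)) = Multiset.map L Finset.univ.val := by
    rw [List.ofFn_eq_map]; rfl
  rw [h1, Fintype.card_subtype, h2]
  unfold countLe
  rw [← Multiset.countP_eq_card_filter, Multiset.countP_map]
  rfl

lemma hil_of_freeWith {P : PersMod k n} {B : Multiset (Pt n)} (h : IsFreeWith P B) (r : Pt n) :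
    Hil P r = countLe B r := by
  obtain ⟨m, L, hB, hiso⟩ := h
  rw [hil_of_iso hiso r, hil_freeModFin, hB]

lemma mem_of_countLe_pos {C : Multiset (Pt n)} {x : Pt n} (h : 0 < countLe C x) :
    ∃ y ∈ C, y ≤ x := by
  classical
  obtain ⟨y, hy⟩ := Multiset.card_pos_iff_exists_mem.mp h
  exact ⟨y, (Multiset.mem_filter.mp hy).1, (Multiset.mem_filter.mp hy).2⟩

lemma countLe_pos_of_mem {C : Multiset (Pt n)} {x : Pt n} (h : x ∈ C) : 0 < countLe C x :=
  Multiset.card_pos_iff_exists_mem.mpr ⟨x, Multiset.mem_filter.mpr ⟨h, le_refl x⟩⟩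

/-- `countLe` determines the multiset. -/
lemma countLe_inj : ∀ (N : ℕ) (B C : Multiset (Pt n)), Multiset.card B = N →
    (∀ r, countLe B r = countLe C r) → B = C := by
  intro N
  induction N with
  | zero =>
    intro B C hB h
    have hB0 : B = 0 := Multiset.card_eq_zero.mp hB
    subst hB0
    by_contra hC
    obtain ⟨y, hy⟩ := Multiset.exists_mem_of_ne_zero (Ne.symm hC)
    have := countLe_pos_of_mem hy
    rw [← h y, countLe_zero] at this
    exact absurd this (lt_irrefl 0)
  | succ N ih =>
    intro B C hB h
    have hBne : B ≠ 0 := by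
      intro h0; rw [h0] at hB; simp at hB
    have hne : (B + C).toFinset.Nonempty := by
      obtain ⟨y, hy⟩ := Multiset.exists_mem_of_ne_zero hBne
      exact ⟨y, Multiset.mem_toFinset.mpr (Multiset.mem_add.mpr (Or.inl hy))⟩
    obtain ⟨x, hxmem, hxmin⟩ := Finset.exists_minimal hne
    have hminBC : ∀ y ∈ B + C, y ≤ x → y = x := by
      intro y hy hyx
      by_contra hne'
      exact hne' (le_antisymm hyx (hxmin (Multiset.mem_toFinset.mpr hy) hyx))
    have hxB : x ∈ B ∧ x ∈ C := by
      rcases Multiset.mem_add.mp (Multiset.mem_toFinset.mp hxmem) with hx | hx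
      · have : 0 < countLe C x := by rw [← h x]; exact countLe_pos_of_mem hx
        obtain ⟨y, hyC, hyx⟩ := mem_of_countLe_pos this
        have := hminBC y (Multiset.mem_add.mpr (Or.inr hyC)) hyx
        exact ⟨hx, this ▸ hyC⟩
      · have : 0 < countLe B x := by rw [h x]; exact countLe_pos_of_mem hx
        obtain ⟨y, hyB, hyx⟩ := mem_of_countLe_pos this
        have := hminBC y (Multiset.mem_add.mpr (Or.inl hyB)) hyx
        exact ⟨this ▸ hyB, hx⟩
    obtain ⟨B₀, rfl⟩ : ∃ B₀, B = x ::ₘ B₀ := ⟨B.erase x, (Multiset.cons_erase hxB.1).symm⟩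
    obtain ⟨C₀, rfl⟩ : ∃ C₀, C = x ::ₘ C₀ := ⟨C.erase x, (Multiset.cons_erase hxB.2).symm⟩
    have hcard : Multiset.card B₀ = N := by
      rw [Multiset.card_cons] at hB; omega
    have h' : ∀ r, countLe B₀ r = countLe C₀ r := by
      intro r
      have := h r
      rw [countLe_cons, countLe_cons] at this
      omega
    rw [ih B₀ C₀ hcard h']

/-- Decomposition lemma: cancel against the disjoint pair. -/
lemma exists_common_part (E O BP BQ : Multiset (Pt n)) (h : E + BQ = BP + O)
    (hd : ∀ x : Pt n, ¬ (x ∈ BP ∧ x ∈ BQ)) : ∃ D, E = BP + D ∧ O = BQ + D := by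
  classical
  refine ⟨E - BP, ?_, ?_⟩ <;> ext x
  all_goals {
    have hcnt : Multiset.count x E + Multiset.count x BQ
        = Multiset.count x BP + Multiset.count x O := by
      rw [← Multiset.count_add, ← Multiset.count_add, h]
    have hdx : Multiset.count x BP = 0 ∨ Multiset.count x BQ = 0 := by
      by_contra hc
      push_neg at hc
      exact hd x ⟨Multiset.count_pos.mp (Nat.pos_of_ne_zero hc.1),
        Multiset.count_pos.mp (Nat.pos_of_ne_zero hc.2)⟩
    simp only [Multiset.count_add, Multiset.count_sub]
    omega }

/-! ### l1 distance and Wasserstein cancellation -/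

lemma l1dist_nonneg (x y : Pt n) : 0 ≤ l1dist x y :=
  Finset.sum_nonneg fun i _ => abs_nonneg _

lemma l1dist_self (x : Pt n) : l1dist x x = 0 := by simp [l1dist]

lemma l1dist_triangle (x y z : Pt n) : l1dist x z ≤ l1dist x y + l1dist y z := by
  rw [l1dist, l1dist, l1dist, ← Finset.sum_add_distrib]
  exact Finset.sum_le_sum fun i _ => abs_sub_le _ _ _

lemma matchCost_cons (p : Pt n × Pt n) (m : Multiset (Pt n × Pt n)) :
    matchCost (p ::ₘ m) = l1dist p.1 p.2 + matchCost m := by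
  simp [matchCost]

lemma matching_surgery (x : Pt n) (A B : Multiset (Pt n)) (m : Multiset (Pt n × Pt n))
    (h1 : m.map Prod.fst = x ::ₘ A) (h2 : m.map Prod.snd = x ::ₘ B) :
    ∃ m' : Multiset (Pt n × Pt n), m'.map Prod.fst = A ∧ m'.map Prod.snd = B ∧
      matchCost m' ≤ matchCost m := by
  classical
  have hx : x ∈ m.map Prod.fst := by rw [h1]; exact Multiset.mem_cons_self _ _
  obtain ⟨p, hp, hpx⟩ := Multiset.mem_map.mp hx
  obtain ⟨m₀, rfl⟩ : ∃ m₀, m = p ::ₘ m₀ := ⟨m.erase p, (Multiset.cons_erase hp).symm⟩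
  rw [Multiset.map_cons, hpx] at h1
  have hA : m₀.map Prod.fst = A := (Multiset.cons_inj_right x).mp h1
  rw [Multiset.map_cons] at h2
  by_cases hp2 : p.2 = x
  · rw [hp2] at h2
    have hB : m₀.map Prod.snd = B := (Multiset.cons_inj_right x).mp h2
    refine ⟨m₀, hA, hB, ?_⟩
    rw [matchCost_cons]
    linarith [l1dist_nonneg p.1 p.2]
  · have hx2 : x ∈ m₀.map Prod.snd := by
      have : x ∈ p.2 ::ₘ m₀.map Prod.snd := by rw [h2]; exact Multiset.mem_cons_self _ _
      rcases Multiset.mem_cons.mp this with h | h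
      · exact absurd h.symm hp2
      · exact h
    obtain ⟨q, hq, hqx⟩ := Multiset.mem_map.mp hx2
    obtain ⟨m₁, rfl⟩ : ∃ m₁, m₀ = q ::ₘ m₁ := ⟨m₀.erase q, (Multiset.cons_erase hq).symm⟩
    rw [Multiset.map_cons] at hA
    rw [Multiset.map_cons, hqx, Multiset.cons_swap] at h2
    have hB : B = p.2 ::ₘ m₁.map Prod.snd := ((Multiset.cons_inj_right x).mp h2).symm
    refine ⟨(q.1, p.2) ::ₘ m₁, ?_, ?_, ?_⟩
    · rw [Multiset.map_cons]; exact hA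
    · rw [Multiset.map_cons]; exact hB.symm
    · rw [matchCost_cons, matchCost_cons, matchCost_cons, hpx, hqx]
      have := l1dist_triangle q.1 x p.2
      simp only
      linarith

lemma wassDist_cons_cancel (x : Pt n) (A B : Multiset (Pt n)) :
    wassDist (x ::ₘ A) (x ::ₘ B) = wassDist A B := by
  apply le_antisymm
  · apply sInf_le_sInf_of_isCoinitialFor
    rintro e ⟨m, hA, hB, rfl⟩
    refine ⟨ENNReal.ofReal (matchCost ((x, x) ::ₘ m)),
      ⟨(x, x) ::ₘ m, by rw [Multiset.map_cons, hA], by rw [Multiset.map_cons, hB], rfl⟩, ?_⟩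
    rw [matchCost_cons, l1dist_self, zero_add]
  · apply sInf_le_sInf_of_isCoinitialFor
    rintro e ⟨m, hA, hB, rfl⟩
    obtain ⟨m', hA', hB', hc⟩ := matching_surgery x A B m hA hB
    exact ⟨ENNReal.ofReal (matchCost m'), ⟨m', hA', hB', rfl⟩, ENNReal.ofReal_le_ofReal hc⟩

lemma wassDist_add_cancel (A B C : Multiset (Pt n)) :
    wassDist (A + C) (B + C) = wassDist A B := by
  induction C using Multiset.induction with
  | empty => simp
  | cons x C ih =>
    rw [Multiset.add_cons, Multiset.add_cons, wassDist_cons_cancel, ih]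

/-! ### Alternating sum of Hilbert functions over a resolution -/

lemma res_alt_sum {M : PersMod k n} (R : Res M) (r : Pt n) :
    (Hil M r : ℤ) = ∑ j ∈ Finset.range (R.len + 1), (-1 : ℤ) ^ j * (Hil (R.P j) r : ℤ) := by
  classical
  set ρ : ℕ → ℕ := fun j => Module.finrank k ↥(LinearMap.range ((R.d j).app r)) with hρ
  have h0 : Hil (R.P 0) r = ρ 0 + Hil M r := by
    have e0 := LinearMap.finrank_range_add_finrank_ker (R.aug.app r)
    have hsurj : LinearMap.range (R.aug.app r) = ⊤ :=
      LinearMap.range_eq_top.mpr (R.aug_surj r)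
    rw [hsurj, finrank_top, ← R.exact_zero r] at e0
    have hρ0 : ρ 0 = Module.finrank k ↥(LinearMap.range ((R.d 0).app r)) := rfl
    unfold Hil
    rw [hρ0]
    omega
  have hsucc : ∀ j, Hil (R.P (j + 1)) r = ρ j + ρ (j + 1) := by
    intro j
    have e1 := LinearMap.finrank_range_add_finrank_ker ((R.d j).app r)
    rw [← R.exact_succ j r] at e1
    have hρj : ρ j = Module.finrank k ↥(LinearMap.range ((R.d j).app r)) := rfl
    have hρj1 : ρ (j + 1) = Module.finrank k ↥(LinearMap.range ((R.d (j + 1)).app r)) := rfl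
    unfold Hil
    rw [hρj, hρj1]
    omega
  have key : ∀ L, (∑ j ∈ Finset.range (L + 1), (-1 : ℤ) ^ j * (Hil (R.P j) r : ℤ))
      = (Hil M r : ℤ) + (-1 : ℤ) ^ L * (ρ L : ℤ) := by
    intro L
    induction L with
    | zero =>
      rw [Finset.sum_range_one, h0]
      push_cast
      ring
    | succ L ih =>
      rw [Finset.sum_range_succ, ih, hsucc L, pow_succ]
      push_cast
      ring
  have hlast : ρ R.len = 0 := by
    have hvan : ∀ y : (R.P (R.len + 1)).X r, y = 0 := R.vanish _ (Nat.lt_succ_self _) r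
    have hzero : (R.d R.len).app r = 0 := by
      apply LinearMap.ext
      intro y
      rw [hvan y, map_zero]
      rfl
    have hr : ρ R.len = Module.finrank k ↥(LinearMap.range ((R.d R.len).app r)) := rfl
    rw [hr, hzero, LinearMap.range_zero]
    exact finrank_bot k _
  rw [key R.len, hlast]
  push_cast
  ring

lemma countLe_even_odd (B : ℕ → Multiset (Pt n)) (ℓ : ℕ) (r : Pt n) :
    (countLe (evenPart B ℓ) r : ℤ) - (countLe (oddPart B ℓ) r : ℤ)
      = ∑ j ∈ Finset.range (ℓ + 1), (-1 : ℤ) ^ j * (countLe (B j) r : ℤ) := by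
  rw [evenPart, oddPart, countLe_sum, countLe_sum]
  push_cast
  rw [← Finset.sum_sub_distrib]
  apply Finset.sum_congr rfl
  intro j _
  by_cases hj : Even j
  · rw [if_pos hj, if_neg (not_not_intro hj), hj.neg_one_pow, countLe_zero]
    push_cast
    ring
  · have hpow : (-1 : ℤ) ^ j = -1 := (Nat.not_even_iff_odd.mp hj).neg_one_pow
    rw [if_neg hj, if_pos hj, hpow, countLe_zero]
    push_cast
    ring

/-- Hilbert identity from a Betti signed barcode. -/
lemma betti_hilbert {M : PersMod k n} {SM : SignedBarcode n} (hSM : IsBettiOf M SM) :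
    ∀ r, (Hil M r : ℤ) = (countLe SM.1 r : ℤ) - (countLe SM.2 r : ℤ) := by
  obtain ⟨R, B, ⟨hfree, _⟩, rfl⟩ := hSM
  intro r
  rw [countLe_even_odd, res_alt_sum R r]
  apply Finset.sum_congr rfl
  intro j _
  rw [hil_of_freeWith (hfree j) r]

end Aux

/-- **Equality part of Theorem 1.5.** The signed 1-Wasserstein distance does not
distinguish minimal Hilbert decompositions from Betti signed barcodes:
`d̂_{W¹}(ĤB(M), ĤB(N)) = d̂_{W¹}(ℬβ(M), ℬβ(N))`. -/
theorem dW1hat_minimal_hilbert_eq_betti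
    {k : Type} [Field k] {n : ℕ}
    (M N : PersMod k n) (hM : FinitelyPresentable M) (hN : FinitelyPresentable N)
    (P Q P' Q' : PersMod k n) (BP BQ BP' BQ' : Multiset (Pt n))
    (hMd : IsMinHilbDecomp (fun x => (Hil M x : ℤ)) P Q BP BQ)
    (hNd : IsMinHilbDecomp (fun x => (Hil N x : ℤ)) P' Q' BP' BQ')
    (SM SN : SignedBarcode n) (hSM : IsBettiOf M SM) (hSN : IsBettiOf N SN) :
    dW1hat (BP, BQ) (BP', BQ') = dW1hat SM SN := by
  obtain ⟨hPf, hQf, hHilM, hdisj⟩ := hMd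
  obtain ⟨hPf', hQf', hHilN, hdisj'⟩ := hNd
  have hMbetti := betti_hilbert hSM
  have hNbetti := betti_hilbert hSN
  have hMcnt : ∀ r, countLe (SM.1 + BQ) r = countLe (BP + SM.2) r := by
    intro r
    rw [countLe_add, countLe_add]
    have h1 := hMbetti r
    have h2 : (Hil M r : ℤ) = (Hil P r : ℤ) - (Hil Q r : ℤ) := hHilM r
    rw [hil_of_freeWith hPf r, hil_of_freeWith hQf r] at h2
    omega
  have hNcnt : ∀ r, countLe (SN.1 + BQ') r = countLe (BP' + SN.2) r := by
    intro r
    rw [countLe_add, countLe_add]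
    have h1 := hNbetti r
    have h2 : (Hil N r : ℤ) = (Hil P' r : ℤ) - (Hil Q' r : ℤ) := hHilN r
    rw [hil_of_freeWith hPf' r, hil_of_freeWith hQf' r] at h2
    omega
  have hMeq : SM.1 + BQ = BP + SM.2 :=
    countLe_inj (Multiset.card (SM.1 + BQ)) _ _ rfl hMcnt
  have hNeq : SN.1 + BQ' = BP' + SN.2 :=
    countLe_inj (Multiset.card (SN.1 + BQ')) _ _ rfl hNcnt
  obtain ⟨D, hE, hO⟩ := exists_common_part SM.1 SM.2 BP BQ hMeq hdisj
  obtain ⟨D', hE', hO'⟩ := exists_common_part SN.1 SN.2 BP' BQ' hNeq hdisj'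
  show wassDist (BP + BQ') (BP' + BQ) = wassDist (SM.1 + SN.2) (SN.1 + SM.2)
  have e1 : SM.1 + SN.2 = (BP + BQ') + (D + D') := by
    rw [hE, hO']
    abel
  have e2 : SN.1 + SM.2 = (BP' + BQ) + (D + D') := by
    rw [hE', hO]
    abel
  rw [e1, e2, wassDist_add_cancel]


end
end
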